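/- Let cl be a closure operator on I with derived independence relation ⫫. Let A, B, C be finite subsets of I with A ⊇ C and B ⊇ C, and suppose b ∈ B \ cl(C) is minimal in B over C. If A ⫫_C {b} and A ⫫_{{b} ∪ C} B, then A ⫫_C B (weak transitivity). -/
import Mathlib


/-- A closure operator on a set (type) `I`. -/
structure IsClosureOp {I : Type*} (cl : Set I → Set I) : Prop where
  extensive : ∀ A, A ⊆ cl A
  mono : ∀ A B : Set I, A ⊆ B → cl A ⊆ cl B
  idem : ∀ A, cl (cl A) = cl A

/-- The independence relation derived from `cl`: `A ⫫_C B`. -/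
def Indep {I : Type*} (cl : Set I → Set I) (A C B : Set I) : Prop :=
  A ∩ cl (B ∪ C) ⊆ cl C ∧ B ∩ cl (A ∪ C) ⊆ cl C

/-- `b` is minimal in `B` over `C` (with respect to `cl`). -/
def MinimalOver {I : Type*} (cl : Set I → Set I) (B C : Set I) (b : I) : Prop :=
  b ∈ B \ cl C ∧ ∀ b' ∈ (B ∩ cl (insert b C)) \ cl C, b ∈ cl (insert b' C)


/-- Weak transitivity of the derived independence relation. -/
theorem stmt_3 {I : Type*} (cl : Set I → Set I) (hcl : IsClosureOp cl)
    (A B C : Set I) (b : I)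
    (hA : A.Finite) (hB : B.Finite) (hC : C.Finite)
    (hCA : C ⊆ A) (hCB : C ⊆ B)
    (hmin : MinimalOver cl B C b)
    (h1 : Indep cl A C {b}) (h2 : Indep cl A (insert b C) B) :
    Indep cl A C B := by
  obtain ⟨⟨hbB, hbC⟩, hminimal⟩ := hmin
  obtain ⟨h11, h12⟩ := h1
  obtain ⟨h21, h22⟩ := h2
  -- {b} ∪ C = insert b C
  have hsing : ({b} : Set I) ∪ C = insert b C := Set.singleton_union
  rw [hsing] at h11
  -- B ∪ insert b C = B ∪ C
  have hBu : B ∪ insert b C = B ∪ C := by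
    apply Set.Subset.antisymm
    · intro x hx
      rcases hx with hx | hx
      · exact Or.inl hx
      · rcases hx with rfl | hx
        · exact Or.inl hbB
        · exact Or.inr hx
    · exact Set.union_subset_union_right B (Set.subset_insert b C)
  rw [hBu] at h21
  constructor
  · intro a ⟨haA, hacl⟩
    exact h11 ⟨haA, h21 ⟨haA, hacl⟩⟩
  · intro b' ⟨hb'B, hb'cl⟩
    by_contra hb'C
    -- b' ∈ cl (A ∪ insert b C)
    have hsub : A ∪ C ⊆ A ∪ insert b C :=
      Set.union_subset_union_right A (Set.subset_insert b C)
    have hb'2 : b' ∈ cl (insert b C) :=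
      h22 ⟨hb'B, hcl.mono _ _ hsub hb'cl⟩
    have hbcl : b ∈ cl (insert b' C) := hminimal b' ⟨⟨hb'B, hb'2⟩, hb'C⟩
    -- insert b' C ⊆ cl (A ∪ C)
    have hsub2 : insert b' C ⊆ cl (A ∪ C) := by
      intro x hx
      rcases hx with rfl | hx
      · exact hb'cl
      · exact hcl.extensive _ (Or.inr hx)
    have : b ∈ cl (A ∪ C) := by
      have := hcl.mono _ _ hsub2 hbcl
      rwa [hcl.idem] at this
    exact hbC (h12 ⟨rfl, this⟩)
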